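/- Let σ > 0 and let F : ℝ × ℝ^d → ℝ. Suppose g₁, g₂ : ℝ × ℝ^d → ℝ are bounded functions, differentiable in the first variable, that both satisfy the equation σ² · ∂_x g(x,y) − x · g(x,y) = F(x,y) for all x ∈ ℝ, y ∈ ℝ^d. Then g₁ = g₂. (Equivalently, any bounded solution u of the homogeneous equation σ² · ∂_x u(x,y) = x · u(x,y) vanishes identically.) -/

import Mathlib

open MeasureTheory

lemma aux_ode (σ : ℝ) (hσ : 0 < σ) (u : ℝ → ℝ) (hdiff : Differentiable ℝ u)
    (C : ℝ) (hB : ∀ x, |u x| ≤ C)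
    (heq : ∀ x, σ ^ 2 * deriv u x = x * u x) : ∀ x, u x = 0 := by
  have hσ2 : (0:ℝ) < σ ^ 2 := by positivity
  set h : ℝ → ℝ := fun x => u x * Real.exp (-(x ^ 2) / (2 * σ ^ 2)) with hh
  have hderiv : ∀ x, HasDerivAt h 0 x := by
    intro x
    have hu : HasDerivAt u (x * u x / σ ^ 2) x := by
      have := (hdiff x).hasDerivAt
      rwa [show deriv u x = x * u x / σ ^ 2 by
        field_simp
        linarith [heq x]] at this
    have he : HasDerivAt (fun x : ℝ => Real.exp (-(x ^ 2) / (2 * σ ^ 2)))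
        (Real.exp (-(x ^ 2) / (2 * σ ^ 2)) * (-(2 * x) / (2 * σ ^ 2))) x := by
      have hx : HasDerivAt (fun x : ℝ => -(x ^ 2) / (2 * σ ^ 2)) (-(2 * x) / (2 * σ ^ 2)) x := by
        have : HasDerivAt (fun x : ℝ => -(x ^ 2)) (-(2 * x)) x := by
          simpa using ((hasDerivAt_pow 2 x).fun_neg)
        exact this.div_const _
      exact hx.exp
    have := hu.fun_mul he
    refine this.congr_deriv ?_
    ring
  have hconst : ∀ x, h x = h 0 := by
    intro x
    exact is_const_of_deriv_eq_zero (fun x => (hderiv x).differentiableAt)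
      (fun x => (hderiv x).deriv) x 0
  have hux : ∀ x, u x = u 0 * Real.exp (x ^ 2 / (2 * σ ^ 2)) := by
    intro x
    have := hconst x
    simp only [hh] at this
    have hnz : Real.exp (-(x ^ 2) / (2 * σ ^ 2)) ≠ 0 := (Real.exp_pos _).ne'
    have h0 : u 0 * Real.exp (-(0 ^ 2 : ℝ) / (2 * σ ^ 2)) = u 0 := by norm_num
    rw [h0] at this
    have : u x = u 0 / Real.exp (-(x ^ 2) / (2 * σ ^ 2)) := by
      field_simp at this ⊢
      linarith
    rw [this, div_eq_mul_inv, ← Real.exp_neg, neg_div, neg_neg]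
  -- boundedness forces u 0 = 0
  have hu0 : u 0 = 0 := by
    by_contra hne
    have habs : ∀ x : ℝ, |u 0| * Real.exp (x ^ 2 / (2 * σ ^ 2)) ≤ C := by
      intro x
      have := hB x
      rw [hux x, abs_mul, abs_of_pos (Real.exp_pos _)] at this
      exact this
    have hpos : 0 < |u 0| := abs_pos.mpr hne
    have hC0 : 0 ≤ C := le_trans (abs_nonneg _) (hB 0)
    set t : ℝ := C / |u 0| with htdef
    have ht0 : 0 ≤ t := div_nonneg hC0 hpos.le
    set x : ℝ := Real.sqrt (2 * σ ^ 2 * t) with hxdef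
    have hx2 : x ^ 2 = 2 * σ ^ 2 * t := Real.sq_sqrt (by positivity)
    have hexp : Real.exp (x ^ 2 / (2 * σ ^ 2)) = Real.exp t := by
      rw [hx2]; congr 1; field_simp
    have hkey := habs x
    rw [hexp] at hkey
    have hge : t + 1 ≤ Real.exp t := Real.add_one_le_exp t
    have : |u 0| * (t + 1) ≤ C := le_trans (by nlinarith) hkey
    have htC : |u 0| * t = C := by
      rw [htdef]; field_simp
    nlinarith
  intro x
  rw [hux x, hu0, zero_mul]

theorem stmt8 {d : ℕ} (hd : 1 ≤ d) (σ : ℝ) (hσ : 0 < σ)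
    (F g₁ g₂ : ℝ × EuclideanSpace ℝ (Fin d) → ℝ)
    (hg₁B : ∃ C : ℝ, ∀ p, |g₁ p| ≤ C)
    (hg₂B : ∃ C : ℝ, ∀ p, |g₂ p| ≤ C)
    (hg₁diff : ∀ y : EuclideanSpace ℝ (Fin d), Differentiable ℝ (fun x => g₁ (x, y)))
    (hg₂diff : ∀ y : EuclideanSpace ℝ (Fin d), Differentiable ℝ (fun x => g₂ (x, y)))
    (hg₁ : ∀ (x : ℝ) (y : EuclideanSpace ℝ (Fin d)),
      σ ^ 2 * deriv (fun t => g₁ (t, y)) x - x * g₁ (x, y) = F (x, y))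
    (hg₂ : ∀ (x : ℝ) (y : EuclideanSpace ℝ (Fin d)),
      σ ^ 2 * deriv (fun t => g₂ (t, y)) x - x * g₂ (x, y) = F (x, y)) :
    g₁ = g₂ := by
  obtain ⟨C₁, hC₁⟩ := hg₁B
  obtain ⟨C₂, hC₂⟩ := hg₂B
  funext p
  obtain ⟨x₀, y⟩ := p
  set u : ℝ → ℝ := fun x => g₁ (x, y) - g₂ (x, y) with hu
  have hdiff : Differentiable ℝ u := (hg₁diff y).sub (hg₂diff y)
  have heq : ∀ x, σ ^ 2 * deriv u x = x * u x := by
    intro x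
    have hd1 := (hg₁diff y) x
    have hd2 := (hg₂diff y) x
    have : deriv u x = deriv (fun t => g₁ (t, y)) x - deriv (fun t => g₂ (t, y)) x :=
      deriv_sub hd1 hd2
    rw [this]
    have e1 := hg₁ x y
    have e2 := hg₂ x y
    simp only [hu]
    ring_nf
    nlinarith [e1, e2]
  have hB : ∀ x, |u x| ≤ C₁ + C₂ := by
    intro x
    calc |u x| ≤ |g₁ (x, y)| + |g₂ (x, y)| := abs_sub _ _
    _ ≤ C₁ + C₂ := add_le_add (hC₁ _) (hC₂ _)
  have := aux_ode σ hσ u hdiff (C₁ + C₂) hB heq x₀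
  simp only [hu] at this
  linarith
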